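/- Let q0 = (1/a12)·(P1/γ1 − 1) ≥ 0. Then for every κm ∈ [0,1], the inequality R2(P2, κm) ≥ R2(q0, 0) holds if and only if κm² ≤ 1 − (1/P2²)·(1 + q0)² + (2·P2 + 1)/P2². -/

import Mathlib

/-- Let `q0 = (1/a12)·(P1/γ1 − 1) ≥ 0`. Then for every
`κm ∈ [0,1]`, `R2(P2, κm) ≥ R2(q0, 0)` iff
`κm² ≤ 1 − (1/P2²)·(1 + q0)² + (2·P2 + 1)/P2²`. -/
theorem stmt13 (P1 P2 a12 α Rbar γ1 γ2 : ℝ)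
    (hP1 : 0 < P1) (hP2 : 0 < P2) (ha12 : 0 < a12) (hα : α ∈ Set.Ioo (0:ℝ) 1)
    (hRbar : Rbar = α * Real.logb 2 (1 + P1))
    (hγ1 : γ1 = (1 + P1) ^ α - 1) (hγ2 : γ2 = (1 + P1) ^ (2 * α) - 1)
    (R2 : ℝ → ℝ → ℝ)
    (hR2 : ∀ p κ, R2 p κ = (1 / 2) * Real.logb 2 (1 + p * (p * (1 - κ ^ 2) + 2)))
    (q0 : ℝ) (hq0 : q0 = (1 / a12) * (P1 / γ1 - 1)) (hq0nn : 0 ≤ q0) :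
    ∀ κm ∈ Set.Icc (0:ℝ) 1,
      (R2 P2 κm ≥ R2 q0 0
        ↔ κm ^ 2 ≤ 1 - (1 / P2 ^ 2) * (1 + q0) ^ 2 + (2 * P2 + 1) / P2 ^ 2) := by
  intro κm hκ
  obtain ⟨hκ0, hκ1⟩ := hκ
  rw [hR2, hR2]
  have hk2 : (0:ℝ) ≤ 1 - κm ^ 2 := by nlinarith
  have hx : (0:ℝ) < 1 + q0 * (q0 * (1 - 0 ^ 2) + 2) := by nlinarith
  have hy : (0:ℝ) < 1 + P2 * (P2 * (1 - κm ^ 2) + 2) := by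
    nlinarith [mul_nonneg (mul_nonneg hP2.le hP2.le) hk2]
  have hP2' : (0:ℝ) < P2 ^ 2 := by positivity
  have hlog : (1 / 2 : ℝ) * Real.logb 2 (1 + P2 * (P2 * (1 - κm ^ 2) + 2)) ≥
      1 / 2 * Real.logb 2 (1 + q0 * (q0 * (1 - 0 ^ 2) + 2)) ↔
      1 + q0 * (q0 * (1 - 0 ^ 2) + 2) ≤ 1 + P2 * (P2 * (1 - κm ^ 2) + 2) := by
    rw [ge_iff_le, mul_le_mul_iff_right₀ (by norm_num : (0:ℝ) < 1 / 2),
      Real.logb_le_logb (by norm_num) hx hy]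
  rw [hlog, show (1:ℝ) - 1 / P2 ^ 2 * (1 + q0) ^ 2 + (2 * P2 + 1) / P2 ^ 2
      = (P2 ^ 2 - (1 + q0) ^ 2 + (2 * P2 + 1)) / P2 ^ 2 by field_simp,
    le_div_iff₀ hP2']
  constructor
  · intro h; nlinarith
  · intro h; nlinarith
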